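/- Let N be a deterministic non-erasing Turing machine with a single binary tape that halts in time t on some input. Then there is a Wang B machine W_N, and a constant c depending only on N, such that W_N started from the encoding of N's initial configuration halts in at most c·t + c steps, with its final tape encoding N's final tape contents. -/

import Mathlib

inductive WInstr : Type
  | L : WInstr
  | R : WInstr
  | M : WInstr
  | J : ℕ → WInstr
  deriving DecidableEq

/-- A configuration of a Wang B machine: instruction pointer, head position, tape. -/
structure WCfg : Type where
  ip : ℕ
  pos : ℤ
  tape : ℤ → Bool

/-- One step of a Wang B machine with program `P`.  If the instruction pointer has
passed beyond the last instruction the machine has halted and the step does nothing. -/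
def wStep (P : List WInstr) (c : WCfg) : WCfg :=
  match P[c.ip]? with
  | none => c
  | some WInstr.L => ⟨c.ip + 1, c.pos - 1, c.tape⟩
  | some WInstr.R => ⟨c.ip + 1, c.pos + 1, c.tape⟩
  | some WInstr.M => ⟨c.ip + 1, c.pos, Function.update c.tape c.pos true⟩
  | some (WInstr.J x) =>
      if c.tape c.pos then ⟨x, c.pos, c.tape⟩ else ⟨c.ip + 1, c.pos, c.tape⟩

/-- A configuration of a single-tape binary Turing machine (states are naturals). -/
structure TMCfg : Type where
  q : ℕ
  pos : ℤ
  tape : ℤ → Bool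

/-- One step of the binary Turing machine with transition function `f`;
`f q r = some (w, d, q')` means: in state `q` reading `r`, write `w`, move right
if `d = true` (left if `d = false`), and enter state `q'`.  `f q r = none` means
the machine is halted. -/
def tmStep (f : ℕ → Bool → Option (Bool × Bool × ℕ)) (c : TMCfg) : TMCfg :=
  match f c.q (c.tape c.pos) with
  | none => c
  | some (w, d, q') =>
      ⟨q', if d then c.pos + 1 else c.pos - 1, Function.update c.tape c.pos w⟩

/-- A binary Turing machine is non-erasing if no rule overwrites 1 with 0. -/
def NonErasing (f : ℕ → Bool → Option (Bool × Bool × ℕ)) : Prop :=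
  ∀ q d q', f q true ≠ some (false, d, q')

/-- The machine is halted in configuration `c`. -/
def TMHalted (f : ℕ → Bool → Option (Bool × Bool × ℕ)) (c : TMCfg) : Prop :=
  f c.q (c.tape c.pos) = none

/-- Equation (2): the instruction sequence `⟨TR_{q_i,0}⟩` encoding the transition rule
for reading 0 (direction `true` is right, `false` is left). -/
def encTR0 (r : Option (Bool × Bool × ℕ)) : List WInstr :=
  match r with
  | some (false, true, j)  => [WInstr.R, WInstr.M, WInstr.M, WInstr.M, WInstr.M, WInstr.J (13 * j)]
  | some (false, false, j) => [WInstr.L, WInstr.L, WInstr.L, WInstr.M, WInstr.M, WInstr.J (13 * j)]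
  | some (true, true, j)   => [WInstr.M, WInstr.R, WInstr.M, WInstr.M, WInstr.M, WInstr.J (13 * j)]
  | some (true, false, j)  => [WInstr.M, WInstr.L, WInstr.L, WInstr.L, WInstr.M, WInstr.J (13 * j)]
  | none => [WInstr.M, WInstr.M, WInstr.M, WInstr.M, WInstr.M, WInstr.M]

/-- Equation (3): the instruction sequence `⟨TR_{q_i,1}⟩` encoding the transition rule
for reading 1 (non-erasing, so the written symbol is again 1). -/
def encTR1 (r : Option (Bool × Bool × ℕ)) : List WInstr :=
  match r with
  | some (_, true, j)  => [WInstr.R, WInstr.M, WInstr.M, WInstr.M, WInstr.J (13 * j)]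
  | some (_, false, j) => [WInstr.L, WInstr.L, WInstr.L, WInstr.M, WInstr.J (13 * j)]
  | none => [WInstr.M, WInstr.M, WInstr.M, WInstr.M, WInstr.M]

/-- Equation (1): the Wang B machine `W_N` encoding the non-erasing Turing machine
with `m` states (halt state `m - 1`) and transition function `f`. -/
def wangOf (m : ℕ) (f : ℕ → Bool → Option (Bool × Bool × ℕ)) : List WInstr :=
  ((List.range (m - 1)).map (fun i =>
    [WInstr.R, WInstr.J (13 * i + 8)] ++ encTR0 (f i false) ++ encTR1 (f i true))).flatten
    ++ [WInstr.M]

/-- The Wang tape `w` encodes the Turing tape `t`: Turing cell `k` is represented by the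
pair of Wang cells `2k, 2k+1`, holding `10` if `t k = 0` and `11` if `t k = 1`;
still-blank pairs `00` (converted on demand during the simulation) may only represent 0. -/
def EncTape (t w : ℤ → Bool) : Prop :=
  ∀ k : ℤ, (w (2 * k) = true ∧ w (2 * k + 1) = t k) ∨
    (w (2 * k) = false ∧ w (2 * k + 1) = false ∧ t k = false)

/-- The Wang configuration `wc` encodes the Turing configuration `c`: instruction pointer
`13 i` for current state `q_i`, head on the left symbol of the encoded read symbol
(which must already be marked), tape encoded as in `EncTape`. -/
def Encodes (wc : WCfg) (c : TMCfg) : Prop :=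
  wc.ip = 13 * c.q ∧ wc.pos = 2 * c.pos ∧ wc.tape (2 * c.pos) = true ∧
    EncTape c.tape wc.tape


section Aux
variable (f : ℕ → Bool → Option (Bool × Bool × ℕ))

def block (i : ℕ) : List WInstr :=
  [WInstr.R, WInstr.J (13 * i + 8)] ++ encTR0 (f i false) ++ encTR1 (f i true)

lemma encTR0_length (r : Option (Bool × Bool × ℕ)) : (encTR0 r).length = 6 := by
  rcases r with _ | ⟨w, d, j⟩
  · rfl
  · cases w <;> cases d <;> rfl

lemma encTR1_length (r : Option (Bool × Bool × ℕ)) : (encTR1 r).length = 5 := by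
  rcases r with _ | ⟨w, d, j⟩
  · rfl
  · cases w <;> cases d <;> rfl

lemma block_length (i : ℕ) : (block f i).length = 13 := by
  simp [block, encTR0_length, encTR1_length]

lemma wangOf_eq (m : ℕ) : wangOf m f = ((List.range (m-1)).map (block f)).flatten ++ [WInstr.M] := rfl

lemma join_def : @List.flatten WInstr = List.flatten := rfl

lemma join_length (n : ℕ) : (((List.range n).map (block f)).flatten).length = 13 * n := by
  rw [join_def]
  induction n with
  | zero => rfl
  | succ n ih =>
    rw [List.range_succ, List.map_append, List.flatten_append]
    simp [ih, block_length]; ring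

lemma join_get (n i k : ℕ) (hi : i < n) (hk : k < 13) :
    (((List.range n).map (block f)).flatten)[13 * i + k]? = (block f i)[k]? := by
  rw [join_def]
  induction n with
  | zero => omega
  | succ n ih =>
    have jl : ∀ n : ℕ, (((List.range n).map (block f)).flatten).length = 13 * n := by
      intro n; rw [← join_def]; exact join_length f n
    rw [List.range_succ, List.map_append, List.flatten_append]
    rcases Nat.lt_or_ge i n with h | h
    · rw [List.getElem?_append_left (by rw [jl]; omega), ih h]
    · have : i = n := by omega
      subst this
      rw [List.getElem?_append_right (by rw [jl]; omega)]
      simp [jl, block_length]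

lemma wangOf_get (m i k : ℕ) (hi : i < m - 1) (hk : k < 13) :
    (wangOf m f)[13 * i + k]? = (block f i)[k]? := by
  rw [wangOf_eq, List.getElem?_append_left (by rw [join_length]; have := block_length f i; omega),
    join_get f _ _ _ hi hk]

lemma wangOf_get_last (m : ℕ) : (wangOf m f)[13 * (m - 1)]? = some WInstr.M := by
  rw [wangOf_eq, List.getElem?_append_right (by rw [join_length]), join_length]
  simp

lemma wangOf_length (m : ℕ) : (wangOf m f).length = 13 * (m - 1) + 1 := by
  rw [wangOf_eq, List.length_append, join_length]; rfl

lemma wang_get_lo (m q k : ℕ) (hq : q < m - 1) (hk : k < 8) :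
    (wangOf m f)[13 * q + k]? =
      (WInstr.R :: WInstr.J (13 * q + 8) :: encTR0 (f q false))[k]? := by
  rw [wangOf_get f m q k hq (by omega)]
  match k, hk with
  | 0, _ => rfl
  | 1, _ => rfl
  | (k+2), h =>
    show (WInstr.R :: WInstr.J _ :: (encTR0 _ ++ encTR1 _))[k+1+1]? = _
    simp only [List.getElem?_cons_succ]
    exact List.getElem?_append_left (by rw [encTR0_length]; omega)

lemma wang_get_hi (m q k : ℕ) (hq : q < m - 1) (hk : k < 5) :
    (wangOf m f)[13 * q + (8 + k)]? = (encTR1 (f q true))[k]? := by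
  rw [wangOf_get f m q (8+k) hq (by omega),
    show (block f q) = WInstr.R :: WInstr.J (13*q+8) ::
      (encTR0 (f q false) ++ encTR1 (f q true)) from rfl,
    show 8 + k = (6+k)+1+1 from by omega]
  simp only [List.getElem?_cons_succ]
  rw [List.getElem?_append_right (by rw [encTR0_length]; omega), encTR0_length]
  congr 1
  omega

end Aux

lemma encTape_update_left {t w : ℤ → Bool} (h : EncTape t w) (k0 : ℤ) :
    EncTape t (Function.update w (2 * k0) true) := by
  intro k
  rcases eq_or_ne k k0 with rfl | hne
  · left
    refine ⟨Function.update_self _ _ _, ?_⟩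
    rw [Function.update_of_ne (by omega)]
    rcases h k with ⟨_, h2⟩ | ⟨_, h2, h3⟩
    · exact h2
    · rw [h2, h3]
  · rw [Function.update_of_ne (by omega), Function.update_of_ne (by omega)]
    exact h k

lemma encTape_write_true {t w : ℤ → Bool} (h : EncTape t w) (k0 : ℤ)
    (hl : w (2 * k0) = true) :
    EncTape (Function.update t k0 true) (Function.update w (2 * k0 + 1) true) := by
  intro k
  rcases eq_or_ne k k0 with rfl | hne
  · left
    rw [Function.update_of_ne (by omega), Function.update_self, Function.update_self]
    exact ⟨hl, rfl⟩
  · rw [Function.update_of_ne (by omega), Function.update_of_ne (by omega),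
      Function.update_of_ne hne]
    exact h k

lemma encTape_congr {t t' w : ℤ → Bool} (h : EncTape t w) (he : ∀ k, t' k = t k) :
    EncTape t' w := by
  intro k
  rw [he k]
  exact h k

lemma wStep_R (P : List WInstr) (i : ℕ) (p : ℤ) (w : ℤ → Bool)
    (h : P[i]? = some WInstr.R) : wStep P ⟨i, p, w⟩ = ⟨i + 1, p + 1, w⟩ := by
  simp [wStep, h]

lemma wStep_L (P : List WInstr) (i : ℕ) (p : ℤ) (w : ℤ → Bool)
    (h : P[i]? = some WInstr.L) : wStep P ⟨i, p, w⟩ = ⟨i + 1, p - 1, w⟩ := by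
  simp [wStep, h]

lemma wStep_M (P : List WInstr) (i : ℕ) (p : ℤ) (w : ℤ → Bool)
    (h : P[i]? = some WInstr.M) :
    wStep P ⟨i, p, w⟩ = ⟨i + 1, p, Function.update w p true⟩ := by
  simp [wStep, h]

lemma wStep_Jt (P : List WInstr) (i x : ℕ) (p : ℤ) (w : ℤ → Bool)
    (h : P[i]? = some (WInstr.J x)) (ht : w p = true) :
    wStep P ⟨i, p, w⟩ = ⟨x, p, w⟩ := by
  simp [wStep, h, ht]

lemma wStep_Jf (P : List WInstr) (i x : ℕ) (p : ℤ) (w : ℤ → Bool)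
    (h : P[i]? = some (WInstr.J x)) (ht : w p = false) :
    wStep P ⟨i, p, w⟩ = ⟨i + 1, p, w⟩ := by
  simp [wStep, h, ht]

lemma WCfg.mk_eq {a a' : ℕ} {b b' : ℤ} {u u' : ℤ → Bool}
    (h1 : a = a') (h2 : b = b') (h3 : u = u') : (⟨a, b, u⟩ : WCfg) = ⟨a', b', u'⟩ := by
  rw [h1, h2, h3]

lemma iter_step (P : List WInstr) (n : ℕ) (a b : WCfg) (h : wStep P a = b) :
    (wStep P)^[n + 1] a = (wStep P)^[n] b := by
  rw [Function.iterate_succ_apply, h]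

lemma sim_step (m : ℕ) (f : ℕ → Bool → Option (Bool × Bool × ℕ)) (hf : NonErasing f)
    (q j : ℕ) (w' d : Bool) (p : ℤ) (t w : ℤ → Bool)
    (hq : q < m - 1)
    (hr : f q (t p) = some (w', d, j))
    (hw0 : w (2 * p) = true) (henc : EncTape t w) :
    ∃ s, 1 ≤ s ∧ s ≤ 8 ∧
      Encodes ((wStep (wangOf m f))^[s] ⟨13 * q, 2 * p, w⟩) (tmStep f ⟨q, p, t⟩) := by
  set P := wangOf m f with hP
  have hw1 : w (2 * p + 1) = t p := by
    rcases henc p with ⟨_, h2⟩ | ⟨h1, _, _⟩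
    · exact h2
    · rw [hw0] at h1; cases h1
  have g0 : P[13 * q]? = some WInstr.R := by
    have h := wang_get_lo f m q 0 hq (by norm_num)
    simpa using h
  have g1 : P[13 * q + 1]? = some (WInstr.J (13 * q + 8)) := by
    have h := wang_get_lo f m q 1 hq (by norm_num)
    simpa using h
  have e1 : wStep P ⟨13 * q, 2 * p, w⟩ = ⟨13 * q + 1, 2 * p + 1, w⟩ := wStep_R _ _ _ _ g0
  cases htp : t p with
  | true =>
    rw [htp] at hr hw1
    have hw' : w' = true := by
      cases w'
      · exact absurd hr (hf q d j)
      · rfl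
    subst hw'
    have e2 : wStep P ⟨13 * q + 1, 2 * p + 1, w⟩ = ⟨13 * q + 8, 2 * p + 1, w⟩ :=
      wStep_Jt _ _ _ _ _ g1 hw1
    have ht' : ∀ k, Function.update t p true k = t k := by
      intro k
      rcases eq_or_ne k p with rfl | h
      · rw [Function.update_self]; exact htp.symm
      · rw [Function.update_of_ne h]
    cases d with
    | true =>
      have htm : tmStep f ⟨q, p, t⟩ = ⟨j, p + 1, Function.update t p true⟩ := by
        simp [tmStep, htp, hr]
      have g8 : P[13 * q + 8]? = some WInstr.R := by
        have h := wang_get_hi f m q 0 hq (by norm_num)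
        rw [hr] at h; simpa [encTR1] using h
      have g9 : P[13 * q + 9]? = some WInstr.M := by
        have h := wang_get_hi f m q 1 hq (by norm_num)
        rw [hr] at h; norm_num [encTR1] at h; exact h
      have g10 : P[13 * q + 10]? = some WInstr.M := by
        have h := wang_get_hi f m q 2 hq (by norm_num)
        rw [hr] at h; norm_num [encTR1] at h; exact h
      have g11 : P[13 * q + 11]? = some WInstr.M := by
        have h := wang_get_hi f m q 3 hq (by norm_num)
        rw [hr] at h; norm_num [encTR1] at h; exact h
      have g12 : P[13 * q + 12]? = some (WInstr.J (13 * j)) := by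
        have h := wang_get_hi f m q 4 hq (by norm_num)
        rw [hr] at h; norm_num [encTR1] at h; exact h
      have e3 : wStep P ⟨13 * q + 8, 2 * p + 1, w⟩ = ⟨13 * q + 9, 2 * p + 2, w⟩ := by
        rw [wStep_R _ _ _ _ g8]
        all_goals exact WCfg.mk_eq (by ring) (by ring) rfl
      have e4 : wStep P ⟨13 * q + 9, 2 * p + 2, w⟩ =
          ⟨13 * q + 10, 2 * p + 2, Function.update w (2 * p + 2) true⟩ := by
        rw [wStep_M _ _ _ _ g9]
        all_goals exact WCfg.mk_eq (by ring) rfl rfl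
      have e5 : wStep P ⟨13 * q + 10, 2 * p + 2, Function.update w (2 * p + 2) true⟩ =
          ⟨13 * q + 11, 2 * p + 2, Function.update w (2 * p + 2) true⟩ := by
        rw [wStep_M _ _ _ _ g10]
        all_goals exact WCfg.mk_eq (by ring) rfl (Function.update_idem _ _ _)
      have e6 : wStep P ⟨13 * q + 11, 2 * p + 2, Function.update w (2 * p + 2) true⟩ =
          ⟨13 * q + 12, 2 * p + 2, Function.update w (2 * p + 2) true⟩ := by
        rw [wStep_M _ _ _ _ g11]
        all_goals exact WCfg.mk_eq (by ring) rfl (Function.update_idem _ _ _)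
      have e7 : wStep P ⟨13 * q + 12, 2 * p + 2, Function.update w (2 * p + 2) true⟩ =
          ⟨13 * j, 2 * p + 2, Function.update w (2 * p + 2) true⟩ :=
        wStep_Jt _ _ _ _ _ g12 (Function.update_self _ _ _)
      refine ⟨7, by norm_num, by norm_num, ?_⟩
      have trace : (wStep P)^[7] ⟨13 * q, 2 * p, w⟩ =
          ⟨13 * j, 2 * p + 2, Function.update w (2 * p + 2) true⟩ :=
        calc (wStep P)^[7] ⟨13 * q, 2 * p, w⟩
            = (wStep P)^[6] ⟨13 * q + 1, 2 * p + 1, w⟩ := iter_step P 6 _ _ e1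
          _ = (wStep P)^[5] ⟨13 * q + 8, 2 * p + 1, w⟩ := iter_step P 5 _ _ e2
          _ = (wStep P)^[4] _ := iter_step P 4 _ _ e3
          _ = (wStep P)^[3] _ := iter_step P 3 _ _ e4
          _ = (wStep P)^[2] _ := iter_step P 2 _ _ e5
          _ = (wStep P)^[1] _ := iter_step P 1 _ _ e6
          _ = (wStep P)^[0] _ := iter_step P 0 _ _ e7
          _ = _ := rfl
      rw [trace, htm]
      refine ⟨rfl, by show (2 * p + 2 : ℤ) = 2 * (p + 1); ring, ?_, ?_⟩
      · show Function.update w (2 * p + 2) true (2 * (p + 1)) = true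
        rw [show (2 * (p + 1) : ℤ) = 2 * p + 2 by ring, Function.update_self]
      · show EncTape (Function.update t p true) (Function.update w (2 * p + 2) true)
        apply encTape_congr (t := t) _ ht'
        have h := encTape_update_left henc (p + 1)
        rw [show (2 * (p + 1) : ℤ) = 2 * p + 2 by ring] at h
        exact h
    | false =>
      have htm : tmStep f ⟨q, p, t⟩ = ⟨j, p - 1, Function.update t p true⟩ := by
        simp [tmStep, htp, hr]
      have g8 : P[13 * q + 8]? = some WInstr.L := by
        have h := wang_get_hi f m q 0 hq (by norm_num)
        rw [hr] at h; simpa [encTR1] using h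
      have g9 : P[13 * q + 9]? = some WInstr.L := by
        have h := wang_get_hi f m q 1 hq (by norm_num)
        rw [hr] at h; norm_num [encTR1] at h; exact h
      have g10 : P[13 * q + 10]? = some WInstr.L := by
        have h := wang_get_hi f m q 2 hq (by norm_num)
        rw [hr] at h; norm_num [encTR1] at h; exact h
      have g11 : P[13 * q + 11]? = some WInstr.M := by
        have h := wang_get_hi f m q 3 hq (by norm_num)
        rw [hr] at h; norm_num [encTR1] at h; exact h
      have g12 : P[13 * q + 12]? = some (WInstr.J (13 * j)) := by
        have h := wang_get_hi f m q 4 hq (by norm_num)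
        rw [hr] at h; norm_num [encTR1] at h; exact h
      have e3 : wStep P ⟨13 * q + 8, 2 * p + 1, w⟩ = ⟨13 * q + 9, 2 * p, w⟩ := by
        rw [wStep_L _ _ _ _ g8]
        all_goals exact WCfg.mk_eq (by ring) (by ring) rfl
      have e4 : wStep P ⟨13 * q + 9, 2 * p, w⟩ = ⟨13 * q + 10, 2 * p - 1, w⟩ := by
        rw [wStep_L _ _ _ _ g9]
        all_goals exact WCfg.mk_eq (by ring) (by ring) rfl
      have e5 : wStep P ⟨13 * q + 10, 2 * p - 1, w⟩ = ⟨13 * q + 11, 2 * p - 2, w⟩ := by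
        rw [wStep_L _ _ _ _ g10]
        all_goals exact WCfg.mk_eq (by ring) (by ring) rfl
      have e6 : wStep P ⟨13 * q + 11, 2 * p - 2, w⟩ =
          ⟨13 * q + 12, 2 * p - 2, Function.update w (2 * p - 2) true⟩ := by
        rw [wStep_M _ _ _ _ g11]
        all_goals exact WCfg.mk_eq (by ring) rfl rfl
      have e7 : wStep P ⟨13 * q + 12, 2 * p - 2, Function.update w (2 * p - 2) true⟩ =
          ⟨13 * j, 2 * p - 2, Function.update w (2 * p - 2) true⟩ :=
        wStep_Jt _ _ _ _ _ g12 (Function.update_self _ _ _)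
      refine ⟨7, by norm_num, by norm_num, ?_⟩
      have trace : (wStep P)^[7] ⟨13 * q, 2 * p, w⟩ =
          ⟨13 * j, 2 * p - 2, Function.update w (2 * p - 2) true⟩ :=
        calc (wStep P)^[7] ⟨13 * q, 2 * p, w⟩
            = (wStep P)^[6] ⟨13 * q + 1, 2 * p + 1, w⟩ := iter_step P 6 _ _ e1
          _ = (wStep P)^[5] ⟨13 * q + 8, 2 * p + 1, w⟩ := iter_step P 5 _ _ e2
          _ = (wStep P)^[4] _ := iter_step P 4 _ _ e3
          _ = (wStep P)^[3] _ := iter_step P 3 _ _ e4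
          _ = (wStep P)^[2] _ := iter_step P 2 _ _ e5
          _ = (wStep P)^[1] _ := iter_step P 1 _ _ e6
          _ = (wStep P)^[0] _ := iter_step P 0 _ _ e7
          _ = _ := rfl
      rw [trace, htm]
      refine ⟨rfl, by show (2 * p - 2 : ℤ) = 2 * (p - 1); ring, ?_, ?_⟩
      · show Function.update w (2 * p - 2) true (2 * (p - 1)) = true
        rw [show (2 * (p - 1) : ℤ) = 2 * p - 2 by ring, Function.update_self]
      · show EncTape (Function.update t p true) (Function.update w (2 * p - 2) true)
        apply encTape_congr (t := t) _ ht'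
        have h := encTape_update_left henc (p - 1)
        rw [show (2 * (p - 1) : ℤ) = 2 * p - 2 by ring] at h
        exact h
  | false =>
    rw [htp] at hr hw1
    have e2 : wStep P ⟨13 * q + 1, 2 * p + 1, w⟩ = ⟨13 * q + 2, 2 * p + 1, w⟩ :=
      wStep_Jf _ _ _ _ _ g1 hw1
    cases w' with
    | false =>
      have ht' : ∀ k, Function.update t p false k = t k := by
        intro k
        rcases eq_or_ne k p with rfl | h
        · rw [Function.update_self]; exact htp.symm
        · rw [Function.update_of_ne h]
      cases d with
      | true =>
        have htm : tmStep f ⟨q, p, t⟩ = ⟨j, p + 1, Function.update t p false⟩ := by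
          simp [tmStep, htp, hr]
        have g2 : P[13 * q + 2]? = some WInstr.R := by
          have h := wang_get_lo f m q 2 hq (by norm_num)
          rw [hr] at h; norm_num [encTR0] at h; exact h
        have g3 : P[13 * q + 3]? = some WInstr.M := by
          have h := wang_get_lo f m q 3 hq (by norm_num)
          rw [hr] at h; norm_num [encTR0] at h; exact h
        have g4 : P[13 * q + 4]? = some WInstr.M := by
          have h := wang_get_lo f m q 4 hq (by norm_num)
          rw [hr] at h; norm_num [encTR0] at h; exact h
        have g5 : P[13 * q + 5]? = some WInstr.M := by
          have h := wang_get_lo f m q 5 hq (by norm_num)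
          rw [hr] at h; norm_num [encTR0] at h; exact h
        have g6 : P[13 * q + 6]? = some WInstr.M := by
          have h := wang_get_lo f m q 6 hq (by norm_num)
          rw [hr] at h; norm_num [encTR0] at h; exact h
        have g7 : P[13 * q + 7]? = some (WInstr.J (13 * j)) := by
          have h := wang_get_lo f m q 7 hq (by norm_num)
          rw [hr] at h; norm_num [encTR0] at h; exact h
        have e3 : wStep P ⟨13 * q + 2, 2 * p + 1, w⟩ = ⟨13 * q + 3, 2 * p + 2, w⟩ := by
          rw [wStep_R _ _ _ _ g2]
          all_goals exact WCfg.mk_eq (by ring) (by ring) rfl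
        have e4 : wStep P ⟨13 * q + 3, 2 * p + 2, w⟩ = ⟨13 * q + 4, 2 * p + 2, Function.update w (2 * p + 2) true⟩ := by
          rw [wStep_M _ _ _ _ g3]
          all_goals exact WCfg.mk_eq (by ring) rfl rfl
        have e5 : wStep P ⟨13 * q + 4, 2 * p + 2, Function.update w (2 * p + 2) true⟩ = ⟨13 * q + 5, 2 * p + 2, Function.update w (2 * p + 2) true⟩ := by
          rw [wStep_M _ _ _ _ g4]
          all_goals exact WCfg.mk_eq (by ring) rfl (Function.update_idem _ _ _)
        have e6 : wStep P ⟨13 * q + 5, 2 * p + 2, Function.update w (2 * p + 2) true⟩ = ⟨13 * q + 6, 2 * p + 2, Function.update w (2 * p + 2) true⟩ := by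
          rw [wStep_M _ _ _ _ g5]
          all_goals exact WCfg.mk_eq (by ring) rfl (Function.update_idem _ _ _)
        have e7 : wStep P ⟨13 * q + 6, 2 * p + 2, Function.update w (2 * p + 2) true⟩ = ⟨13 * q + 7, 2 * p + 2, Function.update w (2 * p + 2) true⟩ := by
          rw [wStep_M _ _ _ _ g6]
          all_goals exact WCfg.mk_eq (by ring) rfl (Function.update_idem _ _ _)
        have e8 : wStep P ⟨13 * q + 7, 2 * p + 2, Function.update w (2 * p + 2) true⟩ = ⟨13 * j, 2 * p + 2, Function.update w (2 * p + 2) true⟩ :=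
          wStep_Jt _ _ _ _ _ g7 (Function.update_self _ _ _)
        refine ⟨8, by norm_num, by norm_num, ?_⟩
        have trace : (wStep P)^[8] ⟨13 * q, 2 * p, w⟩ = ⟨13 * j, 2 * p + 2, Function.update w (2 * p + 2) true⟩ :=
          calc (wStep P)^[8] ⟨13 * q, 2 * p, w⟩
              = (wStep P)^[7] ⟨13 * q + 1, 2 * p + 1, w⟩ := iter_step P 7 _ _ e1
            _ = (wStep P)^[6] ⟨13 * q + 2, 2 * p + 1, w⟩ := iter_step P 6 _ _ e2
            _ = (wStep P)^[5] _ := iter_step P 5 _ _ e3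
            _ = (wStep P)^[4] _ := iter_step P 4 _ _ e4
            _ = (wStep P)^[3] _ := iter_step P 3 _ _ e5
            _ = (wStep P)^[2] _ := iter_step P 2 _ _ e6
            _ = (wStep P)^[1] _ := iter_step P 1 _ _ e7
            _ = (wStep P)^[0] _ := iter_step P 0 _ _ e8
            _ = _ := rfl
        rw [trace, htm]
        refine ⟨rfl, by show (2 * p + 2 : ℤ) = 2 * (p + 1); ring, ?_, ?_⟩
        · show (Function.update w (2 * p + 2) true) (2 * (p + 1)) = true
          rw [show (2 * (p + 1) : ℤ) = 2 * p + 2 by ring, Function.update_self]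
        · show EncTape (Function.update t p false) (Function.update w (2 * p + 2) true)
          apply encTape_congr (t := t) _ ht'
          have h := encTape_update_left henc (p + 1)
          rw [show (2 * (p + 1) : ℤ) = 2 * p + 2 by ring] at h
          exact h

      | false =>
        have htm : tmStep f ⟨q, p, t⟩ = ⟨j, p - 1, Function.update t p false⟩ := by
          simp [tmStep, htp, hr]
        have g2 : P[13 * q + 2]? = some WInstr.L := by
          have h := wang_get_lo f m q 2 hq (by norm_num)
          rw [hr] at h; norm_num [encTR0] at h; exact h
        have g3 : P[13 * q + 3]? = some WInstr.L := by
          have h := wang_get_lo f m q 3 hq (by norm_num)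
          rw [hr] at h; norm_num [encTR0] at h; exact h
        have g4 : P[13 * q + 4]? = some WInstr.L := by
          have h := wang_get_lo f m q 4 hq (by norm_num)
          rw [hr] at h; norm_num [encTR0] at h; exact h
        have g5 : P[13 * q + 5]? = some WInstr.M := by
          have h := wang_get_lo f m q 5 hq (by norm_num)
          rw [hr] at h; norm_num [encTR0] at h; exact h
        have g6 : P[13 * q + 6]? = some WInstr.M := by
          have h := wang_get_lo f m q 6 hq (by norm_num)
          rw [hr] at h; norm_num [encTR0] at h; exact h
        have g7 : P[13 * q + 7]? = some (WInstr.J (13 * j)) := by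
          have h := wang_get_lo f m q 7 hq (by norm_num)
          rw [hr] at h; norm_num [encTR0] at h; exact h
        have e3 : wStep P ⟨13 * q + 2, 2 * p + 1, w⟩ = ⟨13 * q + 3, 2 * p, w⟩ := by
          rw [wStep_L _ _ _ _ g2]
          all_goals exact WCfg.mk_eq (by ring) (by ring) rfl
        have e4 : wStep P ⟨13 * q + 3, 2 * p, w⟩ = ⟨13 * q + 4, 2 * p - 1, w⟩ := by
          rw [wStep_L _ _ _ _ g3]
          all_goals exact WCfg.mk_eq (by ring) (by ring) rfl
        have e5 : wStep P ⟨13 * q + 4, 2 * p - 1, w⟩ = ⟨13 * q + 5, 2 * p - 2, w⟩ := by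
          rw [wStep_L _ _ _ _ g4]
          all_goals exact WCfg.mk_eq (by ring) (by ring) rfl
        have e6 : wStep P ⟨13 * q + 5, 2 * p - 2, w⟩ = ⟨13 * q + 6, 2 * p - 2, Function.update w (2 * p - 2) true⟩ := by
          rw [wStep_M _ _ _ _ g5]
          all_goals exact WCfg.mk_eq (by ring) rfl rfl
        have e7 : wStep P ⟨13 * q + 6, 2 * p - 2, Function.update w (2 * p - 2) true⟩ = ⟨13 * q + 7, 2 * p - 2, Function.update w (2 * p - 2) true⟩ := by
          rw [wStep_M _ _ _ _ g6]
          all_goals exact WCfg.mk_eq (by ring) rfl (Function.update_idem _ _ _)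
        have e8 : wStep P ⟨13 * q + 7, 2 * p - 2, Function.update w (2 * p - 2) true⟩ = ⟨13 * j, 2 * p - 2, Function.update w (2 * p - 2) true⟩ :=
          wStep_Jt _ _ _ _ _ g7 (Function.update_self _ _ _)
        refine ⟨8, by norm_num, by norm_num, ?_⟩
        have trace : (wStep P)^[8] ⟨13 * q, 2 * p, w⟩ = ⟨13 * j, 2 * p - 2, Function.update w (2 * p - 2) true⟩ :=
          calc (wStep P)^[8] ⟨13 * q, 2 * p, w⟩
              = (wStep P)^[7] ⟨13 * q + 1, 2 * p + 1, w⟩ := iter_step P 7 _ _ e1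
            _ = (wStep P)^[6] ⟨13 * q + 2, 2 * p + 1, w⟩ := iter_step P 6 _ _ e2
            _ = (wStep P)^[5] _ := iter_step P 5 _ _ e3
            _ = (wStep P)^[4] _ := iter_step P 4 _ _ e4
            _ = (wStep P)^[3] _ := iter_step P 3 _ _ e5
            _ = (wStep P)^[2] _ := iter_step P 2 _ _ e6
            _ = (wStep P)^[1] _ := iter_step P 1 _ _ e7
            _ = (wStep P)^[0] _ := iter_step P 0 _ _ e8
            _ = _ := rfl
        rw [trace, htm]
        refine ⟨rfl, by show (2 * p - 2 : ℤ) = 2 * (p - 1); ring, ?_, ?_⟩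
        · show (Function.update w (2 * p - 2) true) (2 * (p - 1)) = true
          rw [show (2 * (p - 1) : ℤ) = 2 * p - 2 by ring, Function.update_self]
        · show EncTape (Function.update t p false) (Function.update w (2 * p - 2) true)
          apply encTape_congr (t := t) _ ht'
          have h := encTape_update_left henc (p - 1)
          rw [show (2 * (p - 1) : ℤ) = 2 * p - 2 by ring] at h
          exact h

    | true =>
      cases d with
      | true =>
        have htm : tmStep f ⟨q, p, t⟩ = ⟨j, p + 1, Function.update t p true⟩ := by
          simp [tmStep, htp, hr]
        have g2 : P[13 * q + 2]? = some WInstr.M := by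
          have h := wang_get_lo f m q 2 hq (by norm_num)
          rw [hr] at h; norm_num [encTR0] at h; exact h
        have g3 : P[13 * q + 3]? = some WInstr.R := by
          have h := wang_get_lo f m q 3 hq (by norm_num)
          rw [hr] at h; norm_num [encTR0] at h; exact h
        have g4 : P[13 * q + 4]? = some WInstr.M := by
          have h := wang_get_lo f m q 4 hq (by norm_num)
          rw [hr] at h; norm_num [encTR0] at h; exact h
        have g5 : P[13 * q + 5]? = some WInstr.M := by
          have h := wang_get_lo f m q 5 hq (by norm_num)
          rw [hr] at h; norm_num [encTR0] at h; exact h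
        have g6 : P[13 * q + 6]? = some WInstr.M := by
          have h := wang_get_lo f m q 6 hq (by norm_num)
          rw [hr] at h; norm_num [encTR0] at h; exact h
        have g7 : P[13 * q + 7]? = some (WInstr.J (13 * j)) := by
          have h := wang_get_lo f m q 7 hq (by norm_num)
          rw [hr] at h; norm_num [encTR0] at h; exact h
        have e3 : wStep P ⟨13 * q + 2, 2 * p + 1, w⟩ = ⟨13 * q + 3, 2 * p + 1, Function.update w (2 * p + 1) true⟩ := by
          rw [wStep_M _ _ _ _ g2]
          all_goals exact WCfg.mk_eq (by ring) rfl rfl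
        have e4 : wStep P ⟨13 * q + 3, 2 * p + 1, Function.update w (2 * p + 1) true⟩ = ⟨13 * q + 4, 2 * p + 2, Function.update w (2 * p + 1) true⟩ := by
          rw [wStep_R _ _ _ _ g3]
          all_goals exact WCfg.mk_eq (by ring) (by ring) rfl
        have e5 : wStep P ⟨13 * q + 4, 2 * p + 2, Function.update w (2 * p + 1) true⟩ = ⟨13 * q + 5, 2 * p + 2, Function.update (Function.update w (2 * p + 1) true) (2 * p + 2) true⟩ := by
          rw [wStep_M _ _ _ _ g4]
          all_goals exact WCfg.mk_eq (by ring) rfl rfl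
        have e6 : wStep P ⟨13 * q + 5, 2 * p + 2, Function.update (Function.update w (2 * p + 1) true) (2 * p + 2) true⟩ = ⟨13 * q + 6, 2 * p + 2, Function.update (Function.update w (2 * p + 1) true) (2 * p + 2) true⟩ := by
          rw [wStep_M _ _ _ _ g5]
          all_goals exact WCfg.mk_eq (by ring) rfl (Function.update_idem _ _ _)
        have e7 : wStep P ⟨13 * q + 6, 2 * p + 2, Function.update (Function.update w (2 * p + 1) true) (2 * p + 2) true⟩ = ⟨13 * q + 7, 2 * p + 2, Function.update (Function.update w (2 * p + 1) true) (2 * p + 2) true⟩ := by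
          rw [wStep_M _ _ _ _ g6]
          all_goals exact WCfg.mk_eq (by ring) rfl (Function.update_idem _ _ _)
        have e8 : wStep P ⟨13 * q + 7, 2 * p + 2, Function.update (Function.update w (2 * p + 1) true) (2 * p + 2) true⟩ = ⟨13 * j, 2 * p + 2, Function.update (Function.update w (2 * p + 1) true) (2 * p + 2) true⟩ :=
          wStep_Jt _ _ _ _ _ g7 (Function.update_self _ _ _)
        refine ⟨8, by norm_num, by norm_num, ?_⟩
        have trace : (wStep P)^[8] ⟨13 * q, 2 * p, w⟩ = ⟨13 * j, 2 * p + 2, Function.update (Function.update w (2 * p + 1) true) (2 * p + 2) true⟩ :=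
          calc (wStep P)^[8] ⟨13 * q, 2 * p, w⟩
              = (wStep P)^[7] ⟨13 * q + 1, 2 * p + 1, w⟩ := iter_step P 7 _ _ e1
            _ = (wStep P)^[6] ⟨13 * q + 2, 2 * p + 1, w⟩ := iter_step P 6 _ _ e2
            _ = (wStep P)^[5] _ := iter_step P 5 _ _ e3
            _ = (wStep P)^[4] _ := iter_step P 4 _ _ e4
            _ = (wStep P)^[3] _ := iter_step P 3 _ _ e5
            _ = (wStep P)^[2] _ := iter_step P 2 _ _ e6
            _ = (wStep P)^[1] _ := iter_step P 1 _ _ e7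
            _ = (wStep P)^[0] _ := iter_step P 0 _ _ e8
            _ = _ := rfl
        rw [trace, htm]
        refine ⟨rfl, by show (2 * p + 2 : ℤ) = 2 * (p + 1); ring, ?_, ?_⟩
        · show (Function.update (Function.update w (2 * p + 1) true) (2 * p + 2) true) (2 * (p + 1)) = true
          rw [show (2 * (p + 1) : ℤ) = 2 * p + 2 by ring, Function.update_self]
        · show EncTape (Function.update t p true) (Function.update (Function.update w (2 * p + 1) true) (2 * p + 2) true)
          have h := encTape_update_left (encTape_write_true henc p hw0) (p + 1)
          rw [show (2 * (p + 1) : ℤ) = 2 * p + 2 by ring] at h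
          exact h

      | false =>
        have htm : tmStep f ⟨q, p, t⟩ = ⟨j, p - 1, Function.update t p true⟩ := by
          simp [tmStep, htp, hr]
        have g2 : P[13 * q + 2]? = some WInstr.M := by
          have h := wang_get_lo f m q 2 hq (by norm_num)
          rw [hr] at h; norm_num [encTR0] at h; exact h
        have g3 : P[13 * q + 3]? = some WInstr.L := by
          have h := wang_get_lo f m q 3 hq (by norm_num)
          rw [hr] at h; norm_num [encTR0] at h; exact h
        have g4 : P[13 * q + 4]? = some WInstr.L := by
          have h := wang_get_lo f m q 4 hq (by norm_num)
          rw [hr] at h; norm_num [encTR0] at h; exact h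
        have g5 : P[13 * q + 5]? = some WInstr.L := by
          have h := wang_get_lo f m q 5 hq (by norm_num)
          rw [hr] at h; norm_num [encTR0] at h; exact h
        have g6 : P[13 * q + 6]? = some WInstr.M := by
          have h := wang_get_lo f m q 6 hq (by norm_num)
          rw [hr] at h; norm_num [encTR0] at h; exact h
        have g7 : P[13 * q + 7]? = some (WInstr.J (13 * j)) := by
          have h := wang_get_lo f m q 7 hq (by norm_num)
          rw [hr] at h; norm_num [encTR0] at h; exact h
        have e3 : wStep P ⟨13 * q + 2, 2 * p + 1, w⟩ = ⟨13 * q + 3, 2 * p + 1, Function.update w (2 * p + 1) true⟩ := by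
          rw [wStep_M _ _ _ _ g2]
          all_goals exact WCfg.mk_eq (by ring) rfl rfl
        have e4 : wStep P ⟨13 * q + 3, 2 * p + 1, Function.update w (2 * p + 1) true⟩ = ⟨13 * q + 4, 2 * p, Function.update w (2 * p + 1) true⟩ := by
          rw [wStep_L _ _ _ _ g3]
          all_goals exact WCfg.mk_eq (by ring) (by ring) rfl
        have e5 : wStep P ⟨13 * q + 4, 2 * p, Function.update w (2 * p + 1) true⟩ = ⟨13 * q + 5, 2 * p - 1, Function.update w (2 * p + 1) true⟩ := by
          rw [wStep_L _ _ _ _ g4]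
          all_goals exact WCfg.mk_eq (by ring) (by ring) rfl
        have e6 : wStep P ⟨13 * q + 5, 2 * p - 1, Function.update w (2 * p + 1) true⟩ = ⟨13 * q + 6, 2 * p - 2, Function.update w (2 * p + 1) true⟩ := by
          rw [wStep_L _ _ _ _ g5]
          all_goals exact WCfg.mk_eq (by ring) (by ring) rfl
        have e7 : wStep P ⟨13 * q + 6, 2 * p - 2, Function.update w (2 * p + 1) true⟩ = ⟨13 * q + 7, 2 * p - 2, Function.update (Function.update w (2 * p + 1) true) (2 * p - 2) true⟩ := by
          rw [wStep_M _ _ _ _ g6]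
          all_goals exact WCfg.mk_eq (by ring) rfl rfl
        have e8 : wStep P ⟨13 * q + 7, 2 * p - 2, Function.update (Function.update w (2 * p + 1) true) (2 * p - 2) true⟩ = ⟨13 * j, 2 * p - 2, Function.update (Function.update w (2 * p + 1) true) (2 * p - 2) true⟩ :=
          wStep_Jt _ _ _ _ _ g7 (Function.update_self _ _ _)
        refine ⟨8, by norm_num, by norm_num, ?_⟩
        have trace : (wStep P)^[8] ⟨13 * q, 2 * p, w⟩ = ⟨13 * j, 2 * p - 2, Function.update (Function.update w (2 * p + 1) true) (2 * p - 2) true⟩ :=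
          calc (wStep P)^[8] ⟨13 * q, 2 * p, w⟩
              = (wStep P)^[7] ⟨13 * q + 1, 2 * p + 1, w⟩ := iter_step P 7 _ _ e1
            _ = (wStep P)^[6] ⟨13 * q + 2, 2 * p + 1, w⟩ := iter_step P 6 _ _ e2
            _ = (wStep P)^[5] _ := iter_step P 5 _ _ e3
            _ = (wStep P)^[4] _ := iter_step P 4 _ _ e4
            _ = (wStep P)^[3] _ := iter_step P 3 _ _ e5
            _ = (wStep P)^[2] _ := iter_step P 2 _ _ e6
            _ = (wStep P)^[1] _ := iter_step P 1 _ _ e7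
            _ = (wStep P)^[0] _ := iter_step P 0 _ _ e8
            _ = _ := rfl
        rw [trace, htm]
        refine ⟨rfl, by show (2 * p - 2 : ℤ) = 2 * (p - 1); ring, ?_, ?_⟩
        · show (Function.update (Function.update w (2 * p + 1) true) (2 * p - 2) true) (2 * (p - 1)) = true
          rw [show (2 * (p - 1) : ℤ) = 2 * p - 2 by ring, Function.update_self]
        · show EncTape (Function.update t p true) (Function.update (Function.update w (2 * p + 1) true) (2 * p - 2) true)
          have h := encTape_update_left (encTape_write_true henc p hw0) (p - 1)
          rw [show (2 * (p - 1) : ℤ) = 2 * p - 2 by ring] at h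
          exact h


lemma sim_halted (m : ℕ) (f : ℕ → Bool → Option (Bool × Bool × ℕ))
    (cfg : TMCfg) (wc : WCfg) (hqe : cfg.q = m - 1) (henc : Encodes wc cfg) :
    ((wStep (wangOf m f))^[1] wc).ip = (wangOf m f).length ∧
      EncTape cfg.tape (((wStep (wangOf m f))^[1] wc).tape) := by
  obtain ⟨q0, p, t⟩ := cfg
  obtain ⟨ip, pos, w⟩ := wc
  obtain ⟨h1, h2, h3, h4⟩ := henc
  simp only at h1 h2 h3 h4 hqe
  subst h1 h2 hqe
  have gM : (wangOf m f)[13 * (m - 1)]? = some WInstr.M := by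
    exact wangOf_get_last f m
  have e : wStep (wangOf m f) ⟨13 * (m - 1), 2 * p, w⟩ =
      ⟨13 * (m - 1) + 1, 2 * p, Function.update w (2 * p) true⟩ := wStep_M _ _ _ _ gM
  rw [Function.iterate_one, e]
  constructor
  · show 13 * (m - 1) + 1 = _
    rw [wangOf_length]
  · exact encTape_update_left h4 p

lemma sim_main (m : ℕ) (hm : 1 ≤ m) (f : ℕ → Bool → Option (Bool × Bool × ℕ))
    (hf : NonErasing f)
    (hhalt : ∀ q r, q < m → (f q r = none ↔ q = m - 1))
    (hvalid : ∀ q r w d q', q < m → f q r = some (w, d, q') → q' < m) :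
    ∀ (t : ℕ) (cfg : TMCfg) (wc : WCfg), cfg.q < m → Encodes wc cfg →
      TMHalted f ((tmStep f)^[t] cfg) →
      ∃ s ≤ 8 * t + 1,
        ((wStep (wangOf m f))^[s] wc).ip = (wangOf m f).length ∧
        EncTape ((tmStep f)^[t] cfg).tape (((wStep (wangOf m f))^[s] wc).tape) := by
  intro t
  induction t with
  | zero =>
    intro cfg wc hq henc hH
    have hqe : cfg.q = m - 1 := (hhalt cfg.q _ hq).mp hH
    obtain ⟨hip, htp⟩ := sim_halted m f cfg wc hqe henc
    exact ⟨1, by omega, hip, htp⟩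
  | succ t ih =>
    intro cfg wc hq henc hH
    by_cases h : TMHalted f cfg
    · have hqe : cfg.q = m - 1 := (hhalt cfg.q _ hq).mp h
      have hfix : (tmStep f)^[t + 1] cfg = cfg :=
        Function.iterate_fixed (by simp [tmStep, show f cfg.q (cfg.tape cfg.pos) = none from h]) (t + 1)
      obtain ⟨hip, htp⟩ := sim_halted m f cfg wc hqe henc
      rw [hfix]
      exact ⟨1, by omega, hip, htp⟩
    · have hql : cfg.q < m - 1 := by
        rcases Nat.lt_or_ge cfg.q (m - 1) with h' | h'
        · exact h'
        · exfalso
          exact h ((hhalt cfg.q _ hq).mpr (by omega))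
      rcases hrule : f cfg.q (cfg.tape cfg.pos) with _ | ⟨w', d, j⟩
      · exact absurd hrule h
      · obtain ⟨q0, p, t0⟩ := cfg
        obtain ⟨ip, pos, w⟩ := wc
        obtain ⟨h1, h2, h3, h4⟩ := henc
        simp only at h1 h2 h3 h4 hrule hql hq
        subst h1 h2
        obtain ⟨s0, hs01, hs08, hencs⟩ :=
          sim_step m f hf q0 j w' d p t0 w hql hrule h3 h4
        have hq' : (tmStep f ⟨q0, p, t0⟩).q < m := by
          have : (tmStep f ⟨q0, p, t0⟩).q = j := by simp [tmStep, hrule]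
          rw [this]
          exact hvalid q0 _ w' d j hq hrule
        have hH' : TMHalted f ((tmStep f)^[t] (tmStep f ⟨q0, p, t0⟩)) := by
          rwa [← Function.iterate_succ_apply]
        obtain ⟨s, hs, hip, henct⟩ := ih (tmStep f ⟨q0, p, t0⟩) _ hq' hencs hH'
        refine ⟨s + s0, by omega, ?_, ?_⟩
        · rw [Function.iterate_add_apply]
          exact hip
        · have hh : (tmStep f)^[t + 1] (⟨q0, p, t0⟩ : TMCfg) =
              (tmStep f)^[t] (tmStep f ⟨q0, p, t0⟩) := Function.iterate_succ_apply _ _ _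
          rw [hh, Function.iterate_add_apply]
          exact henct

/-- If the non-erasing machine `N` halts in time `t`, then the Wang B machine `W_N`,
started from the encoding of the initial configuration, halts (its instruction pointer
passes beyond the last instruction) within `c·t + c` steps, for a constant `c`
depending only on `N`, with final tape encoding `N`'s final tape contents. -/
theorem stmt6 (m : ℕ) (hm : 1 ≤ m) (f : ℕ → Bool → Option (Bool × Bool × ℕ))
    (hf : NonErasing f)
    (hhalt : ∀ q r, q < m → (f q r = none ↔ q = m - 1))
    (hvalid : ∀ q r w d q', q < m → f q r = some (w, d, q') → q' < m) :
    ∃ c : ℕ, ∀ (cfg : TMCfg) (t : ℕ) (wc : WCfg), cfg.q < m → Encodes wc cfg →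
      TMHalted f ((tmStep f)^[t] cfg) →
      ∃ s ≤ c * t + c,
        ((wStep (wangOf m f))^[s] wc).ip = (wangOf m f).length ∧
        EncTape ((tmStep f)^[t] cfg).tape (((wStep (wangOf m f))^[s] wc).tape) := by
  refine ⟨8, ?_⟩
  intro cfg t wc hq henc hH
  obtain ⟨s, hs, hip, htp⟩ := sim_main m hm f hf hhalt hvalid t cfg wc hq henc hH
  exact ⟨s, by omega, hip, htp⟩
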